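/- The function G(z) := (1/z)·Log(1 + (1+i)·F(z)) is analytic on the open first quadrant Q = {z ∈ ℂ : Re z > 0, Im z > 0}, where F(z) := (1/(2π))·(Log((1+z)/(1−z)) + i·Log((1+iz)/(1−iz))). -/

import Mathlib

open Complex

/-- `F(z) = (1/(2π))·(Log((1+z)/(1−z)) + i·Log((1+iz)/(1−iz)))`. -/
noncomputable def F (z : ℂ) : ℂ :=
  (1 / (2 * (Real.pi : ℂ))) *
    (Complex.log ((1 + z) / (1 - z)) + Complex.I * Complex.log ((1 + Complex.I * z) / (1 - Complex.I * z)))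

/-- `G(z) = (1/z)·Log(1 + (1+i)·F(z))`. -/
noncomputable def G (z : ℂ) : ℂ := (1 / z) * Complex.log (1 + (1 + Complex.I) * F z)

lemma sub_ne_zero_of_im_pos {z : ℂ} (hz : 0 < z.im) : (1 : ℂ) - z ≠ 0 := by
  intro h
  have : z = 1 := by linear_combination -h
  simp [this] at hz

lemma im_div_pos {z : ℂ} (hz : 0 < z.im) : 0 < ((1 + z) / (1 - z)).im := by
  have h1 : (1 : ℂ) - z ≠ 0 := sub_ne_zero_of_im_pos hz
  have hn : 0 < Complex.normSq (1 - z) := Complex.normSq_pos.mpr h1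
  rw [Complex.div_im, ← sub_div]
  apply div_pos _ hn
  simp only [Complex.add_im, Complex.add_re, Complex.sub_re, Complex.sub_im,
    Complex.one_re, Complex.one_im]
  nlinarith

lemma arg_lt_pi_of_im_pos {w : ℂ} (hw : 0 < w.im) : w.arg < Real.pi := by
  refine lt_of_le_of_ne (Complex.arg_le_pi w) fun h => ?_
  rw [Complex.arg_eq_pi_iff] at h
  linarith [h.2]

lemma abs_le_abs_quot {z : ℂ} (hz : 0 < z.re ∧ 0 < z.im) :
    ‖(1 + Complex.I * z) / (1 - Complex.I * z)‖ ≤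
      ‖(1 + z) / (1 - z)‖ := by
  rw [Complex.norm_def, Complex.norm_def]
  apply Real.sqrt_le_sqrt
  rw [Complex.normSq_div, Complex.normSq_div]
  have h1 : (1 : ℂ) - z ≠ 0 := sub_ne_zero_of_im_pos hz.2
  have h2 : (1 : ℂ) - Complex.I * z ≠ 0 := by
    apply sub_ne_zero_of_im_pos
    simp [Complex.mul_im, hz.1]
  have hn1 : 0 < Complex.normSq (1 - z) := Complex.normSq_pos.mpr h1
  have hn2 : 0 < Complex.normSq (1 - Complex.I * z) := Complex.normSq_pos.mpr h2
  rw [div_le_div_iff₀ hn2 hn1]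
  simp only [Complex.normSq_apply, Complex.add_re, Complex.add_im, Complex.sub_re,
    Complex.sub_im, Complex.one_re, Complex.one_im, Complex.mul_re, Complex.mul_im,
    Complex.I_re, Complex.I_im]
  obtain ⟨hx, hy⟩ := hz
  nlinarith [sq_nonneg z.re, sq_nonneg z.im, mul_pos hx hy]

lemma re_pos_aux {z : ℂ} (hz : 0 < z.re ∧ 0 < z.im) :
    0 < (1 + (1 + Complex.I) * F z).re := by
  set w₁ : ℂ := (1 + z) / (1 - z) with hw₁
  set w₂ : ℂ := (1 + Complex.I * z) / (1 - Complex.I * z) with hw₂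
  have him₁ : 0 < w₁.im := im_div_pos hz.2
  have him₂ : 0 < w₂.im := by
    have : 0 < (Complex.I * z).im := by simp [Complex.mul_im, hz.1]
    exact im_div_pos this
  have hb₁ : w₁.arg < Real.pi := arg_lt_pi_of_im_pos him₁
  have hb₂ : w₂.arg < Real.pi := arg_lt_pi_of_im_pos him₂
  have hw₂ne : w₂ ≠ 0 := by
    intro h; rw [h] at him₂; simp at him₂
  have ha : Real.log ‖w₂‖ ≤ Real.log ‖w₁‖ :=
    Real.log_le_log (norm_pos_iff.mpr hw₂ne) (abs_le_abs_quot hz)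
  have hre : (1 + (1 + Complex.I) * F z).re =
      1 + (Real.log ‖w₁‖ - Real.log ‖w₂‖
        - w₁.arg - w₂.arg) / (2 * Real.pi) := by
    have hπ : (2 * (Real.pi : ℂ)) = ((2 * Real.pi : ℝ) : ℂ) := by push_cast; ring
    rw [F, ← hw₁, ← hw₂, hπ]
    rw [show (1 : ℂ) / ((2 * Real.pi : ℝ) : ℂ) = (((2 * Real.pi)⁻¹ : ℝ) : ℂ) by
      push_cast; ring]
    simp only [Complex.add_re, Complex.one_re, Complex.mul_re, Complex.mul_im,
      Complex.add_im, Complex.one_im, Complex.I_re, Complex.I_im,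
      Complex.ofReal_re, Complex.ofReal_im, Complex.log_re, Complex.log_im]
    field_simp
    ring
  rw [hre]
  have hπ : 0 < Real.pi := Real.pi_pos
  rw [show (1 : ℝ) + (Real.log ‖w₁‖ - Real.log ‖w₂‖
        - w₁.arg - w₂.arg) / (2 * Real.pi)
      = (2 * Real.pi + (Real.log ‖w₁‖ - Real.log ‖w₂‖
        - w₁.arg - w₂.arg)) / (2 * Real.pi) by field_simp]
  apply div_pos _ (by linarith)
  linarith

lemma F_differentiableAt {z : ℂ} (hz : 0 < z.re ∧ 0 < z.im) :
    DifferentiableAt ℂ F z := by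
  have h1 : (1 : ℂ) - z ≠ 0 := sub_ne_zero_of_im_pos hz.2
  have h2 : (1 : ℂ) - Complex.I * z ≠ 0 := by
    apply sub_ne_zero_of_im_pos
    simp [Complex.mul_im, hz.1]
  have him₁ : 0 < ((1 + z) / (1 - z)).im := im_div_pos hz.2
  have him₂ : 0 < ((1 + Complex.I * z) / (1 - Complex.I * z)).im := by
    have : 0 < (Complex.I * z).im := by simp [Complex.mul_im, hz.1]
    exact im_div_pos this
  have hq1 : DifferentiableAt ℂ (fun z : ℂ => (1 + z) / (1 - z)) z := by
    apply DifferentiableAt.div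
    · fun_prop
    · fun_prop
    · exact h1
  have hq2 : DifferentiableAt ℂ (fun z : ℂ => (1 + Complex.I * z) / (1 - Complex.I * z)) z := by
    apply DifferentiableAt.div
    · fun_prop
    · fun_prop
    · exact h2
  have hl1 : DifferentiableAt ℂ (fun z : ℂ => Complex.log ((1 + z) / (1 - z))) z :=
    by exact (Complex.differentiableAt_log (Complex.mem_slitPlane_iff.mpr (Or.inr him₁.ne'))).comp z hq1
  have hl2 : DifferentiableAt ℂ
      (fun z : ℂ => Complex.log ((1 + Complex.I * z) / (1 - Complex.I * z))) z :=
    by exact (Complex.differentiableAt_log (Complex.mem_slitPlane_iff.mpr (Or.inr him₂.ne'))).comp z hq2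
  unfold F
  exact (differentiableAt_const _).mul (hl1.add ((differentiableAt_const _).mul hl2))

/-- `G` is analytic on the open first quadrant. -/
theorem G_analyticOnNhd_first_quadrant :
    AnalyticOnNhd ℂ G {z : ℂ | 0 < z.re ∧ 0 < z.im} := by
  have hopen : IsOpen {z : ℂ | 0 < z.re ∧ 0 < z.im} :=
    (isOpen_lt continuous_const Complex.continuous_re).inter
      (isOpen_lt continuous_const Complex.continuous_im)
  apply DifferentiableOn.analyticOnNhd _ hopen
  intro z hz
  obtain ⟨hzr, hzi⟩ := hz
  have hz0 : z ≠ 0 := by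
    intro h; rw [h] at hzr; simp at hzr
  apply DifferentiableAt.differentiableWithinAt
  unfold G
  apply DifferentiableAt.mul
  · exact (differentiableAt_const _).div differentiableAt_id hz0
  · have hF : DifferentiableAt ℂ F z := F_differentiableAt ⟨hzr, hzi⟩
    have hmem : (1 + (1 + Complex.I) * F z) ∈ Complex.slitPlane :=
      Complex.mem_slitPlane_iff.mpr (Or.inl (re_pos_aux ⟨hzr, hzi⟩))
    exact (Complex.differentiableAt_log hmem).comp z
      ((differentiableAt_const _).add ((differentiableAt_const _).mul hF))
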